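/- Let 0 = a_0 < a_1 < ⋯ < a_r and b_0 > b_1 > ⋯ > b_r = 0 be integers satisfying b_0·a_i + a_r·b_i = a_r·b_0 for all i (i.e., a_i/a_r + b_i/b_0 = 1), and let S = ⟨a_0, …, a_r⟩ and T = ⟨b_0, …, b_r⟩ be the numerical semigroups they generate. Let α and β be nonnegative real numbers with α < 1. Then there exists L ∈ ℕ such that for every integer l ≥ L and every s ∈ S with s ≤ a_r·α·l + β and a_r·α·l + β ≤ a_r·l, there exist λ_0, …, λ_r ∈ ℕ with λ_0 + ⋯ + λ_r = l, s = λ_0 a_0 + ⋯ + λ_r a_r, and a_r·(λ_0 b_0 + ⋯ + λ_r b_r) = b_0·(a_r·l − s) (in particular λ_0 b_0 + ⋯ + λ_r b_r ∈ T). -/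

import Mathlib

/-- let `0 = a_0 < a_1 < ⋯ < a_r` and `b_0 > b_1 > ⋯ > b_r = 0`
satisfy `b_0·a_i + a_r·b_i = a_r·b_0` for all `i` (i.e. `a_i/a_r + b_i/b_0 = 1`),
and let `S = ⟨a_i⟩`, `T = ⟨b_i⟩`.  For nonnegative reals `α < 1` and `β` there is
`L` such that for all `l ≥ L` and `s ∈ S` with `s ≤ a_r·α·l + β ≤ a_r·l`, there
are `λ_i` with `∑ λ_i = l`, `s = ∑ λ_i a_i` and
`a_r·(∑ λ_i b_i) = b_0·(a_r·l − s)`; in particular `∑ λ_i b_i ∈ T`. -/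
theorem stmt11 {r : ℕ} (hr : 1 ≤ r) (a b : Fin (r + 1) → ℕ)
    (ha0 : a 0 = 0) (hamono : StrictMono a)
    (hbr : b (Fin.last r) = 0) (hbanti : StrictAnti b)
    (hcond : ∀ i, b 0 * a i + a (Fin.last r) * b i = a (Fin.last r) * b 0)
    (α β : ℝ) (hα0 : 0 ≤ α) (hα1 : α < 1) (hβ : 0 ≤ β) :
    ∃ L : ℕ, ∀ l : ℕ, L ≤ l → ∀ s : ℕ,
      s ∈ AddSubmonoid.closure (Set.range a) →
      (s : ℝ) ≤ (a (Fin.last r) : ℝ) * α * l + β →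
      ((a (Fin.last r) : ℝ) * α * l + β) ≤ (a (Fin.last r) : ℝ) * l →
      ∃ c : Fin (r + 1) → ℕ,
        (∑ i, c i) = l ∧ (∑ i, c i * a i) = s ∧
        a (Fin.last r) * (∑ i, c i * b i) = b 0 * (a (Fin.last r) * l - s) ∧
        (∑ i, c i * b i) ∈ AddSubmonoid.closure (Set.range b) := by
  classical
  set A := a (Fin.last r) with hA
  have h0last : (0 : Fin (r + 1)) ≠ Fin.last r := by
    intro h
    have := congrArg Fin.val h
    simp [Fin.last] at this
    omega
  have hApos : 0 < A := by
    have := hamono (show (0 : Fin (r + 1)) < Fin.last r from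
      lt_of_le_of_ne (Fin.zero_le _) h0last)
    omega
  set K := (r + 1) * A with hK
  have h1α : (0 : ℝ) < 1 - α := by linarith
  refine ⟨⌈(β + K) / (1 - α)⌉₊, ?_⟩
  intro l hl s hs hs1 hs2
  -- get a representation of s
  have hrep : ∀ x ∈ AddSubmonoid.closure (Set.range a),
      ∃ μ : Fin (r + 1) → ℕ, x = ∑ i, μ i * a i := by
    intro x hx
    induction hx using AddSubmonoid.closure_induction with
    | mem x hx =>
        obtain ⟨i, rfl⟩ := hx
        refine ⟨fun j => if j = i then 1 else 0, ?_⟩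
        simp [ite_mul]
    | zero => exact ⟨0, by simp⟩
    | add x y hx hy ihx ihy =>
        obtain ⟨μ, hμ⟩ := ihx
        obtain ⟨ν, hν⟩ := ihy
        exact ⟨μ + ν, by simp [hμ, hν, add_mul, Finset.sum_add_distrib]⟩
  obtain ⟨μ, hμ⟩ := hrep s hs
  set g : Fin (r + 1) → ℕ :=
    fun i => if i = 0 ∨ i = Fin.last r then 0 else μ i / A with hg
  set rem : Fin (r + 1) → ℕ :=
    fun i => if i = 0 ∨ i = Fin.last r then 0 else μ i % A with hrem
  set G := ∑ j, g j * a j with hG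
  set R := ∑ j, rem j with hR
  -- decomposition of s
  have key : ∀ i, μ i * a i
      = rem i * a i + (g i * a i) * A + (if i = Fin.last r then μ i * A else 0) := by
    intro i
    by_cases h0 : i = 0
    · subst h0
      simp [hrem, hg, ha0, h0last]
    · by_cases hlast : i = Fin.last r
      · subst hlast
        simp [hrem, hg]
        exact Or.inl rfl
      · simp only [hrem, hg, if_neg (by tauto : ¬(i = 0 ∨ i = Fin.last r)), if_neg hlast,
          add_zero]
        rw [mul_assoc, mul_comm (a i) A, ← mul_assoc, ← add_mul, Nat.mod_add_div']
  have hdecomp : s = (∑ i, rem i * a i) + (μ (Fin.last r) + G) * A := by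
    calc s = ∑ i, μ i * a i := hμ
      _ = ∑ i, (rem i * a i + (g i * a i) * A + (if i = Fin.last r then μ i * A else 0)) :=
          Finset.sum_congr rfl fun i _ => key i
      _ = (∑ i, rem i * a i) + (∑ i, g i * a i) * A + μ (Fin.last r) * A := by
          rw [Finset.sum_add_distrib, Finset.sum_add_distrib,
            Finset.sum_ite_eq' Finset.univ (Fin.last r) (fun i => μ i * A),
            if_pos (Finset.mem_univ _), Finset.sum_mul]
      _ = _ := by rw [← hG]; ring
  have hmain : (μ (Fin.last r) + G) * A ≤ s := hdecomp ▸ Nat.le_add_left _ _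
  have hRK : R ≤ K := by
    have : ∀ i : Fin (r + 1), rem i ≤ A := by
      intro i
      by_cases h : i = 0 ∨ i = Fin.last r
      · simp [hrem, h]
      · simp only [hrem, if_neg h]
        exact le_of_lt (Nat.mod_lt _ hApos)
    calc R ≤ ∑ _i : Fin (r + 1), A := Finset.sum_le_sum fun i _ => this i
      _ = K := by simp [hK]
  -- the bound T ≤ l
  have hlL : (β + K) / (1 - α) ≤ (l : ℝ) := by
    refine le_trans (Nat.le_ceil _) ?_
    exact_mod_cast hl
  have hβK : β + (K : ℝ) ≤ (1 - α) * l := by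
    rw [div_le_iff₀ h1α] at hlL
    linarith
  have hTl : μ (Fin.last r) + G + R ≤ l := by
    have hcast : ((μ (Fin.last r) + G : ℕ) : ℝ) * A ≤ (s : ℝ) := by
      exact_mod_cast hmain
    have hRcast : (R : ℝ) ≤ (K : ℝ) := by exact_mod_cast hRK
    have hA1 : (1 : ℝ) ≤ (A : ℝ) := by exact_mod_cast hApos
    have h1 : ((μ (Fin.last r) + G + R : ℕ) : ℝ) * A ≤ (l : ℝ) * A := by
      push_cast
      push_cast at hcast
      nlinarith [hs1, (Nat.cast_nonneg l : (0:ℝ) ≤ (l:ℝ)), (Nat.cast_nonneg K : (0:ℝ) ≤ (K:ℝ))]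
    have h2 : ((μ (Fin.last r) + G + R : ℕ) : ℝ) ≤ (l : ℝ) :=
      le_of_mul_le_mul_right h1 (by exact_mod_cast hApos)
    exact_mod_cast h2
  have hsAl : s ≤ A * l := by
    have : (s : ℝ) ≤ ((A * l : ℕ) : ℝ) := by
      push_cast
      linarith [hs1.trans hs2]
    exact_mod_cast this
  -- the coefficients
  set c : Fin (r + 1) → ℕ := fun i =>
    rem i + (if i = 0 then l - (μ (Fin.last r) + G + R) else 0)
      + (if i = Fin.last r then μ (Fin.last r) + G else 0) with hc
  have hcsum : (∑ i, c i) = l := by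
    rw [hc]
    simp only [Finset.sum_add_distrib,
      Finset.sum_ite_eq' Finset.univ (0 : Fin (r + 1)),
      Finset.sum_ite_eq' Finset.univ (Fin.last r), if_pos (Finset.mem_univ _), ← hR]
    omega
  have hcasum : (∑ i, c i * a i) = s := by
    have : ∀ i, c i * a i = rem i * a i
        + (if i = 0 then (l - (μ (Fin.last r) + G + R)) * a i else 0)
        + (if i = Fin.last r then (μ (Fin.last r) + G) * a i else 0) := by
      intro i
      rw [hc]
      by_cases h0 : i = 0
      · subst h0; simp [h0last, ha0]
      · by_cases hlast : i = Fin.last r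
        · subst hlast; simp [h0last.symm, add_mul]
        · simp [h0, hlast]
    rw [Finset.sum_congr rfl fun i _ => this i]
    rw [Finset.sum_add_distrib, Finset.sum_add_distrib,
      Finset.sum_ite_eq' Finset.univ (0 : Fin (r + 1)),
      Finset.sum_ite_eq' Finset.univ (Fin.last r), if_pos (Finset.mem_univ _),
      if_pos (Finset.mem_univ _), ha0]
    rw [hdecomp]
    ring_nf
    rfl
  refine ⟨c, hcsum, hcasum, ?_, ?_⟩
  · -- the b-identity
    have hkey : b 0 * (∑ i, c i * a i) + A * (∑ i, c i * b i) = A * b 0 * (∑ i, c i) := by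
      rw [Finset.mul_sum, Finset.mul_sum, Finset.mul_sum, ← Finset.sum_add_distrib]
      refine Finset.sum_congr rfl fun i _ => ?_
      have h1 : b 0 * (c i * a i) + A * (c i * b i) = c i * (b 0 * a i + A * b i) := by ring
      rw [h1, hcond i]
      ring
    rw [hcasum, hcsum] at hkey
    have h3 : b 0 * (A * l - s) + b 0 * s = b 0 * (A * l) := by
      rw [← Nat.mul_add, Nat.sub_add_cancel hsAl]
    have h4 : b 0 * (A * l) = A * b 0 * l := by ring
    omega
  · refine AddSubmonoid.sum_mem _ fun i _ => ?_
    exact AddSubmonoid.nsmul_mem _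
      (AddSubmonoid.subset_closure (Set.mem_range_self i)) (c i)
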